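/- (Triangle example) Let X₁, X₂, X₃ be a linearly independent family in 𝔽₂ⁿ and define f : 𝔽₂ⁿ → 𝔽₂ by the majority rule: f(q) is the value attained by at least two of q·X₁, q·X₂, q·X₃. Then C_{X₁}(f) = C_{X₂}(f) = C_{X₃}(f) = N/2 and C_{X₁+X₂+X₃}(f) = −N/2, where N = 2ⁿ; hence each of X₁, X₂, X₃, X₁⊕X₂⊕X₃ is output by the algorithm with probability exactly 1/4. -/
import Mathlib


/-- The inner product of two vectors in `𝔽₂ⁿ`. -/
def dotp {n : ℕ} (q X : Fin n → ZMod 2) : ZMod 2 := ∑ i, q i * X i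

/-- The Deutsch–Jozsa coefficient `C_j(f) = #{q : j·q = f q} − #{q : j·q ≠ f q}`. -/
def coefC {n : ℕ} (f : (Fin n → ZMod 2) → ZMod 2) (j : Fin n → ZMod 2) : ℤ :=
  ((Finset.univ.filter (fun q : Fin n → ZMod 2 => dotp j q = f q)).card : ℤ) -
  ((Finset.univ.filter (fun q : Fin n → ZMod 2 => dotp j q ≠ f q)).card : ℤ)

lemma dotp_comm {n : ℕ} (q X : Fin n → ZMod 2) : dotp q X = dotp X q := by
  simp [dotp, mul_comm]

lemma dotp_add_right {n : ℕ} (q u v : Fin n → ZMod 2) :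
    dotp q (u + v) = dotp q u + dotp q v := by
  simp [dotp, mul_add, Finset.sum_add_distrib]

lemma dotp_add_left {n : ℕ} (q r u : Fin n → ZMod 2) :
    dotp (q + r) u = dotp q u + dotp r u := by
  simp [dotp, add_mul, Finset.sum_add_distrib]

lemma dotp_single {n : ℕ} (i : Fin n) (u : Fin n → ZMod 2) :
    dotp (Pi.single i 1) u = u i := by
  simp [dotp, Pi.single_apply, Finset.sum_ite_eq]

lemma eq_zero_of_forall_dotp {n : ℕ} {u : Fin n → ZMod 2}
    (h : ∀ q, dotp q u = 0) : u = 0 := by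
  funext i
  have := h (Pi.single i 1)
  rwa [dotp_single] at this

lemma exists_dotp_one {n : ℕ} {u : Fin n → ZMod 2} (hu : u ≠ 0) :
    ∃ q, dotp q u = 1 := by
  by_contra h
  push_neg at h
  apply hu
  apply eq_zero_of_forall_dotp
  intro q
  have hx : ∀ x : ZMod 2, x ≠ 1 → x = 0 := by decide
  exact hx _ (h q)

lemma zmod2_cases : ∀ x : ZMod 2, x = 0 ∨ x = 1 := by decide

lemma exists_dotp_pair10 {n : ℕ} {u v : Fin n → ZMod 2} (hu : u ≠ 0) (huv : u ≠ v) :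
    ∃ q, dotp q u = 1 ∧ dotp q v = 0 := by
  by_contra h
  push_neg at h
  -- so ∀ q, dotp q u = 1 → dotp q v = 1
  have h1 : ∀ q, dotp q u = 1 → dotp q v = 1 := by
    intro q hq
    have := h q hq
    have hx : ∀ x : ZMod 2, x ≠ 0 → x = 1 := by decide
    exact hx _ this
  obtain ⟨p, hp⟩ := exists_dotp_one hu
  apply huv
  have key : ∀ q, dotp q (u + v) = 0 := by
    intro q
    rw [dotp_add_right]
    rcases zmod2_cases (dotp q u) with h0 | h01
    · -- dotp q u = 0; consider q + p
      have hqp : dotp (q + p) u = 1 := by rw [dotp_add_left, h0, hp]; decide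
      have hqpv := h1 _ hqp
      rw [dotp_add_left] at hqpv
      have hpv := h1 p hp
      rw [hpv] at hqpv
      have hqv : dotp q v = 0 := by
        have hx : ∀ x : ZMod 2, x + 1 = 1 → x = 0 := by decide
        exact hx _ hqpv
      rw [h0, hqv]; decide
    · rw [h01, h1 q h01]; decide
  have := eq_zero_of_forall_dotp key
  -- u + v = 0 → u = v
  have : u + v + v = v := by rw [this]; simp
  have hvv : v + v = 0 := by
    funext i
    have hx : ∀ x : ZMod 2, x + x = 0 := by decide
    exact hx _
  rwa [add_assoc, hvv, add_zero] at this

lemma dotp_pair_surj {n : ℕ} {u v : Fin n → ZMod 2} (hu : u ≠ 0) (hv : v ≠ 0) (huv : u ≠ v) :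
    ∀ s t : ZMod 2, ∃ q, dotp q u = s ∧ dotp q v = t := by
  obtain ⟨q10, h10u, h10v⟩ := exists_dotp_pair10 hu huv
  obtain ⟨q01, h01v, h01u⟩ := exists_dotp_pair10 hv huv.symm
  intro s t
  rcases zmod2_cases s with rfl | rfl <;> rcases zmod2_cases t with rfl | rfl
  · exact ⟨0, by simp [dotp], by simp [dotp]⟩
  · exact ⟨q01, h01u, h01v⟩
  · exact ⟨q10, h10u, h10v⟩
  · refine ⟨q10 + q01, ?_, ?_⟩ <;> rw [dotp_add_left]
    · rw [h10u, h01u]; decide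
    · rw [h10v, h01v]; decide

open Finset in
lemma fiber_card_eq {n : ℕ} {u v : Fin n → ZMod 2} (hu : u ≠ 0) (hv : v ≠ 0) (huv : u ≠ v)
    (s t s' t' : ZMod 2) :
    (univ.filter (fun q : Fin n → ZMod 2 => dotp q u = s ∧ dotp q v = t)).card =
    (univ.filter (fun q : Fin n → ZMod 2 => dotp q u = s' ∧ dotp q v = t')).card := by
  obtain ⟨q₀, hq₀u, hq₀v⟩ := dotp_pair_surj hu hv huv (s + s') (t + t')
  have key : ∀ a b : ZMod 2, a + (a + b) = b := by decide
  have cancel : ∀ x : Fin n → ZMod 2, x + q₀ + q₀ = x := by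
    intro x; funext i
    have hx : ∀ a b : ZMod 2, a + b + b = a := by decide
    exact hx _ _
  apply Finset.card_bij' (fun x _ => x + q₀) (fun x _ => x + q₀)
  · intro x hx
    simp only [mem_filter, mem_univ, true_and] at hx ⊢
    rw [dotp_add_left, dotp_add_left, hx.1, hx.2, hq₀u, hq₀v]
    exact ⟨key s s', key t t'⟩
  · intro x hx
    simp only [mem_filter, mem_univ, true_and] at hx ⊢
    rw [dotp_add_left, dotp_add_left, hx.1, hx.2, hq₀u, hq₀v]
    constructor
    · have : ∀ a b : ZMod 2, a + (b + a) = b := by decide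
      exact this _ _
    · have : ∀ a b : ZMod 2, a + (b + a) = b := by decide
      exact this _ _
  · intro x _; exact cancel x
  · intro x _; exact cancel x

open Finset in
lemma fiber_card_four {n : ℕ} {u v : Fin n → ZMod 2} (hu : u ≠ 0) (hv : v ≠ 0) (huv : u ≠ v) :
    4 * (univ.filter (fun q : Fin n → ZMod 2 => dotp q u = 0 ∧ dotp q v = 0)).card = 2 ^ n := by
  have htot : (univ : Finset (Fin n → ZMod 2)).card =
      ∑ p : ZMod 2 × ZMod 2, (univ.filter
        (fun q : Fin n → ZMod 2 => (dotp q u, dotp q v) = p)).card := by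
    exact Finset.card_eq_sum_card_fiberwise (fun x _ => mem_univ _)
  have hcard : (univ : Finset (Fin n → ZMod 2)).card = 2 ^ n := by
    simp [Finset.card_univ]
  have heq : ∀ p : ZMod 2 × ZMod 2,
      (univ.filter (fun q : Fin n → ZMod 2 => (dotp q u, dotp q v) = p)).card =
      (univ.filter (fun q : Fin n → ZMod 2 => dotp q u = 0 ∧ dotp q v = 0)).card := by
    intro p
    have : (univ.filter (fun q : Fin n → ZMod 2 => (dotp q u, dotp q v) = p)) =
        (univ.filter (fun q : Fin n → ZMod 2 => dotp q u = p.1 ∧ dotp q v = p.2)) := by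
      apply Finset.filter_congr
      intro x _
      constructor
      · intro h; exact ⟨by rw [← h], by rw [← h]⟩
      · intro h; rw [h.1, h.2]
    rw [this]
    exact fiber_card_eq hu hv huv p.1 p.2 0 0
  rw [htot] at hcard
  rw [Finset.sum_congr rfl (fun p _ => heq p)] at hcard
  simp only [Finset.sum_const, Finset.card_univ, smul_eq_mul] at hcard
  have : Fintype.card (ZMod 2 × ZMod 2) = 4 := by decide
  rwa [this] at hcard

lemma sq_quarter (c : ℤ) (N : ℕ) (h : 2 * c = 2 ^ N ∨ 2 * c = -(2 ^ N)) :
    ((c : ℚ) / 2 ^ N) ^ 2 = 1 / 4 := by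
  have h2 : (2 : ℚ) ^ N ≠ 0 := by positivity
  rcases h with h | h
  · have hc : (2 : ℚ) * c = 2 ^ N := by exact_mod_cast h
    field_simp
    linear_combination (2 * (c : ℚ) + 2 ^ N) * hc
  · have hc : (2 : ℚ) * c = -(2 ^ N) := by exact_mod_cast h
    field_simp
    linear_combination (2 * (c : ℚ) - 2 ^ N) * hc

open Finset in
theorem triangle_example' {n : ℕ} (X₁ X₂ X₃ : Fin n → ZMod 2)
    (hX : LinearIndependent (ZMod 2) ![X₁, X₂, X₃])
    (f : (Fin n → ZMod 2) → ZMod 2)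
    (hf : ∀ q, (f q = dotp q X₁ ∧ f q = dotp q X₂) ∨
               (f q = dotp q X₁ ∧ f q = dotp q X₃) ∨
               (f q = dotp q X₂ ∧ f q = dotp q X₃)) :
    (2 * coefC f X₁ = 2 ^ n ∧ 2 * coefC f X₂ = 2 ^ n ∧ 2 * coefC f X₃ = 2 ^ n ∧
      2 * coefC f (X₁ + X₂ + X₃) = -(2 ^ n)) ∧
    (((coefC f X₁ : ℚ) / 2 ^ n) ^ 2 = 1 / 4 ∧
     ((coefC f X₂ : ℚ) / 2 ^ n) ^ 2 = 1 / 4 ∧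
     ((coefC f X₃ : ℚ) / 2 ^ n) ^ 2 = 1 / 4 ∧
     ((coefC f (X₁ + X₂ + X₃) : ℚ) / 2 ^ n) ^ 2 = 1 / 4) := by
  have hinj : Function.Injective ![X₁, X₂, X₃] := hX.injective
  have h12 : X₁ ≠ X₂ := by
    intro h; exact absurd (hinj (show ![X₁, X₂, X₃] 0 = ![X₁, X₂, X₃] 1 by simpa using h))
      (by decide)
  have h13 : X₁ ≠ X₃ := by
    intro h; exact absurd (hinj (show ![X₁, X₂, X₃] 0 = ![X₁, X₂, X₃] 2 by simpa using h))
      (by decide)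
  have h23 : X₂ ≠ X₃ := by
    intro h; exact absurd (hinj (show ![X₁, X₂, X₃] 1 = ![X₁, X₂, X₃] 2 by simpa using h))
      (by decide)
  set u := X₁ + X₂ with hu_def
  set v := X₁ + X₃ with hv_def
  have addcancel : ∀ x y : Fin n → ZMod 2, x + y = 0 → x = y := by
    intro x y h
    funext i
    have := congrFun h i
    have hx : ∀ a b : ZMod 2, a + b = 0 → a = b := by decide
    exact hx _ _ this
  have hu : u ≠ 0 := fun h => h12 (addcancel _ _ h)
  have hv : v ≠ 0 := fun h => h13 (addcancel _ _ h)
  have huv : u ≠ v := fun h => h23 (add_left_cancel (hu_def ▸ hv_def ▸ h))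
  -- the common fiber cardinality
  set K := (univ.filter (fun q : Fin n → ZMod 2 => dotp q u = 0 ∧ dotp q v = 0)).card with hK
  have h4K : 4 * K = 2 ^ n := fiber_card_four hu hv huv
  -- majority case analysis
  have majlem : ∀ a b c d : ZMod 2, ((d = a ∧ d = b) ∨ (d = a ∧ d = c) ∨ (d = b ∧ d = c)) →
      ((¬(a = d) ↔ (a + b = 1 ∧ a + c = 1)) ∧
       (¬(b = d) ↔ (a + b = 1 ∧ a + c = 0)) ∧
       (¬(c = d) ↔ (a + b = 0 ∧ a + c = 1)) ∧
       (¬(a + b + c = d) ↔ ¬(a + b = 0 ∧ a + c = 0))) := by decide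
  have hdotu : ∀ q : Fin n → ZMod 2, dotp q u = dotp q X₁ + dotp q X₂ := fun q =>
    dotp_add_right q X₁ X₂
  have hdotv : ∀ q : Fin n → ZMod 2, dotp q v = dotp q X₁ + dotp q X₃ := fun q =>
    dotp_add_right q X₁ X₃
  -- disagreement sets
  have e₁ : univ.filter (fun q : Fin n → ZMod 2 => dotp X₁ q ≠ f q) =
      univ.filter (fun q : Fin n → ZMod 2 => dotp q u = 1 ∧ dotp q v = 1) := by
    apply Finset.filter_congr
    intro q _
    rw [dotp_comm X₁ q, hdotu q, hdotv q]
    exact (majlem _ _ _ _ (hf q)).1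
  have e₂ : univ.filter (fun q : Fin n → ZMod 2 => dotp X₂ q ≠ f q) =
      univ.filter (fun q : Fin n → ZMod 2 => dotp q u = 1 ∧ dotp q v = 0) := by
    apply Finset.filter_congr
    intro q _
    rw [dotp_comm X₂ q, hdotu q, hdotv q]
    exact (majlem _ _ _ _ (hf q)).2.1
  have e₃ : univ.filter (fun q : Fin n → ZMod 2 => dotp X₃ q ≠ f q) =
      univ.filter (fun q : Fin n → ZMod 2 => dotp q u = 0 ∧ dotp q v = 1) := by
    apply Finset.filter_congr
    intro q _
    rw [dotp_comm X₃ q, hdotu q, hdotv q]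
    exact (majlem _ _ _ _ (hf q)).2.2.1
  have e₄ : univ.filter (fun q : Fin n → ZMod 2 => dotp (X₁ + X₂ + X₃) q ≠ f q) =
      univ.filter (fun q : Fin n → ZMod 2 => ¬(dotp q u = 0 ∧ dotp q v = 0)) := by
    apply Finset.filter_congr
    intro q _
    rw [dotp_comm (X₁ + X₂ + X₃) q, hdotu q, hdotv q]
    have hL : dotp q (X₁ + X₂ + X₃) = dotp q X₁ + dotp q X₂ + dotp q X₃ := by
      rw [dotp_add_right, dotp_add_right]
    rw [hL]
    exact (majlem _ _ _ _ (hf q)).2.2.2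
  -- cardinalities of disagreement sets
  have d₁ : (univ.filter (fun q : Fin n → ZMod 2 => dotp X₁ q ≠ f q)).card = K := by
    rw [e₁]; exact fiber_card_eq hu hv huv 1 1 0 0
  have d₂ : (univ.filter (fun q : Fin n → ZMod 2 => dotp X₂ q ≠ f q)).card = K := by
    rw [e₂]; exact fiber_card_eq hu hv huv 1 0 0 0
  have d₃ : (univ.filter (fun q : Fin n → ZMod 2 => dotp X₃ q ≠ f q)).card = K := by
    rw [e₃]; exact fiber_card_eq hu hv huv 0 1 0 0
  have d₄ : (univ.filter (fun q : Fin n → ZMod 2 => dotp (X₁ + X₂ + X₃) q ≠ f q)).card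
      = 2 ^ n - K := by
    rw [e₄]
    have := Finset.card_filter_add_card_filter_not
      (s := (univ : Finset (Fin n → ZMod 2)))
      (p := fun q => dotp q u = 0 ∧ dotp q v = 0)
    rw [Finset.card_univ] at this
    have hcard : Fintype.card (Fin n → ZMod 2) = 2 ^ n := by simp
    omega
  -- total cardinality splits
  have hNcard : (univ : Finset (Fin n → ZMod 2)).card = 2 ^ n := by
    simp [Finset.card_univ]
  have split : ∀ j : Fin n → ZMod 2,
      (univ.filter (fun q : Fin n → ZMod 2 => dotp j q = f q)).card +
      (univ.filter (fun q : Fin n → ZMod 2 => dotp j q ≠ f q)).card = 2 ^ n := by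
    intro j
    have := Finset.card_filter_add_card_filter_not
      (s := (univ : Finset (Fin n → ZMod 2))) (p := fun q => dotp j q = f q)
    rw [hNcard] at this
    exact this
  have hKle : K ≤ 2 ^ n := by omega
  -- integer identities
  have c₁ : 2 * coefC f X₁ = 2 ^ n := by
    have hs := split X₁
    unfold coefC
    rw [d₁] at hs ⊢
    have hs' : ((univ.filter (fun q : Fin n → ZMod 2 => dotp X₁ q = f q)).card : ℤ) + K =
        2 ^ n := by exact_mod_cast hs
    have h4K' : 4 * (K : ℤ) = 2 ^ n := by exact_mod_cast h4K
    linarith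
  have c₂ : 2 * coefC f X₂ = 2 ^ n := by
    have hs := split X₂
    unfold coefC
    rw [d₂] at hs ⊢
    have hs' : ((univ.filter (fun q : Fin n → ZMod 2 => dotp X₂ q = f q)).card : ℤ) + K =
        2 ^ n := by exact_mod_cast hs
    have h4K' : 4 * (K : ℤ) = 2 ^ n := by exact_mod_cast h4K
    linarith
  have c₃ : 2 * coefC f X₃ = 2 ^ n := by
    have hs := split X₃
    unfold coefC
    rw [d₃] at hs ⊢
    have hs' : ((univ.filter (fun q : Fin n → ZMod 2 => dotp X₃ q = f q)).card : ℤ) + K =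
        2 ^ n := by exact_mod_cast hs
    have h4K' : 4 * (K : ℤ) = 2 ^ n := by exact_mod_cast h4K
    linarith
  have c₄ : 2 * coefC f (X₁ + X₂ + X₃) = -(2 ^ n) := by
    have hs := split (X₁ + X₂ + X₃)
    unfold coefC
    rw [d₄] at hs ⊢
    have hs' : ((univ.filter
        (fun q : Fin n → ZMod 2 => dotp (X₁ + X₂ + X₃) q = f q)).card : ℤ) +
        ((2 ^ n - K : ℕ) : ℤ) = 2 ^ n := by exact_mod_cast hs
    rw [Nat.cast_sub hKle] at hs'
    rw [Nat.cast_sub hKle]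
    have h4K' : 4 * (K : ℤ) = 2 ^ n := by exact_mod_cast h4K
    push_cast at hs' ⊢
    linarith
  exact ⟨⟨c₁, c₂, c₃, c₄⟩,
    sq_quarter _ _ (Or.inl c₁), sq_quarter _ _ (Or.inl c₂),
    sq_quarter _ _ (Or.inl c₃), sq_quarter _ _ (Or.inr c₄)⟩

/-- **Triangle example.** If `X₁, X₂, X₃` are linearly independent in `𝔽₂ⁿ` and `f(q)`
is the majority value among `q·X₁, q·X₂, q·X₃`, then
`C_{X₁}(f) = C_{X₂}(f) = C_{X₃}(f) = N/2` and `C_{X₁+X₂+X₃}(f) = −N/2` (with `N = 2ⁿ`),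
so each of the four outcomes `X₁, X₂, X₃, X₁⊕X₂⊕X₃` occurs with probability `1/4`. -/
theorem triangle_example {n : ℕ} (X₁ X₂ X₃ : Fin n → ZMod 2)
    (hX : LinearIndependent (ZMod 2) ![X₁, X₂, X₃])
    (f : (Fin n → ZMod 2) → ZMod 2)
    (hf : ∀ q, (f q = dotp q X₁ ∧ f q = dotp q X₂) ∨
               (f q = dotp q X₁ ∧ f q = dotp q X₃) ∨
               (f q = dotp q X₂ ∧ f q = dotp q X₃)) :
    (2 * coefC f X₁ = 2 ^ n ∧ 2 * coefC f X₂ = 2 ^ n ∧ 2 * coefC f X₃ = 2 ^ n ∧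
      2 * coefC f (X₁ + X₂ + X₃) = -(2 ^ n)) ∧
    (((coefC f X₁ : ℚ) / 2 ^ n) ^ 2 = 1 / 4 ∧
     ((coefC f X₂ : ℚ) / 2 ^ n) ^ 2 = 1 / 4 ∧
     ((coefC f X₃ : ℚ) / 2 ^ n) ^ 2 = 1 / 4 ∧
     ((coefC f (X₁ + X₂ + X₃) : ℚ) / 2 ^ n) ^ 2 = 1 / 4) := by
  exact triangle_example' X₁ X₂ X₃ hX f hf
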